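/- Let T be a positively edge-weighted tree, v_1, v_2, v_3, v_4 nodes such that the oriented paths P_{v_1,v_2} and P_{v_3,v_4} share at least one edge with the common subpath traversed in opposite directions. Then (Ψ(v_2) - Ψ(v_1)) · (Ψ(v_4) - Ψ(v_3)) = -Σ_{e ∈ P} w(e) < 0, where P is the set of shared edges. -/

import Mathlib

open SimpleGraph

/-- The unique path between two vertices of a tree, as a walk. -/
noncomputable def treePath {V : Type*} (G : SimpleGraph V) (hG : G.IsTree) (a b : V) :
    G.Walk a b :=
  (hG.existsUnique_path a b).choose

/-- The square root embedding with base node `v`: the coordinate of `Ψ_v u` at edge `e`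
is `√(w e)` if `e` lies on the path from `v` to `u`, and `0` otherwise. -/
noncomputable def sqrtEmbed {V : Type*} [DecidableEq V] (G : SimpleGraph V) (hG : G.IsTree)
    [Fintype G.edgeSet] (w : Sym2 V → ℝ) (v u : V) : EuclideanSpace ℝ G.edgeSet :=
  WithLp.toLp 2 (fun e => if (e : Sym2 V) ∈ (treePath G hG v u).edges then Real.sqrt (w e) else 0)

/-- The tree metric: sum of the weights of the edges on the unique path. -/
noncomputable def treeDist {V : Type*} (G : SimpleGraph V) (hG : G.IsTree)
    (w : Sym2 V → ℝ) (a b : V) : ℝ :=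
  ((treePath G hG a b).edges.map w).sum

section aux
variable {V : Type*} [DecidableEq V] {G : SimpleGraph V}
set_option linter.unusedSectionVars false

lemma treePath_isPath (hG : G.IsTree) (a b : V) : (treePath G hG a b).IsPath :=
  (hG.existsUnique_path a b).choose_spec.1

lemma treePath_unique (hG : G.IsTree) {a b : V} (p : G.Walk a b) (hp : p.IsPath) :
    p = treePath G hG a b :=
  (hG.existsUnique_path a b).choose_spec.2 p hp

lemma mem_treePath_iff (hG : G.IsTree) (a b : V) (e : Sym2 V) :
    e ∈ (treePath G hG a b).edges ↔ ¬ (G.deleteEdges {e}).Reachable a b := by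
  constructor
  · intro he hr
    obtain ⟨q⟩ := hr
    have hq : (q.toPath : (G.deleteEdges {e}).Walk a b).IsPath := q.toPath.2
    have hsub : ∀ e' ∈ (q.toPath : (G.deleteEdges {e}).Walk a b).edges, e' ∈ G.edgeSet := by
      intro e' he'
      have := Walk.edges_subset_edgeSet _ he'
      rw [edgeSet_deleteEdges] at this
      exact this.1
    have hpath := hq.transfer hsub
    have heq := treePath_unique hG _ hpath
    have : e ∈ ((q.toPath : (G.deleteEdges {e}).Walk a b).transfer G hsub).edges := heq ▸ he
    rw [Walk.edges_transfer] at this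
    have := Walk.edges_subset_edgeSet _ this
    rw [edgeSet_deleteEdges] at this
    exact this.2 rfl
  · intro h
    by_contra he
    exact h ⟨(treePath G hG a b).toDeleteEdges {e}
      (fun e' he' => by simp only [Set.mem_singleton_iff]; rintro rfl; exact he he')⟩

lemma dart_reachable {a b : V} {p : G.Walk a b} (hp : p.IsPath) {d : G.Dart}
    (hd : d ∈ p.darts) :
    (G.deleteEdges {d.edge}).Reachable a d.toProd.1 ∧
      (G.deleteEdges {d.edge}).Reachable d.toProd.2 b := by
  induction p with
  | nil => simp at hd
  | @cons u c b h q ih =>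
    rw [Walk.darts_cons, List.mem_cons] at hd
    rw [Walk.cons_isPath_iff] at hp
    rcases hd with rfl | hd
    · refine ⟨Reachable.refl _, ⟨q.toDeleteEdges {Dart.edge ⟨(u, c), h⟩} ?_⟩⟩
      intro e' he'
      simp only [Set.mem_singleton_iff]
      rintro rfl
      exact hp.2 (Walk.fst_mem_support_of_mem_edges q he')
    · obtain ⟨h1, h2⟩ := ih hp.1 hd
      have hne : s(u, c) ≠ d.edge := by
        intro heq
        have hmem : s(u, c) ∈ q.edges := by
          rw [heq]; exact List.mem_map_of_mem (f := SimpleGraph.Dart.edge) hd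
        exact hp.2 (Walk.fst_mem_support_of_mem_edges q hmem)
      have hadj : (G.deleteEdges {d.edge}).Adj u c := by
        rw [deleteEdges_adj]
        exact ⟨h, by simpa using hne⟩
      exact ⟨hadj.reachable.trans h1, h2⟩

lemma edge_mem_treePath (hG : G.IsTree) {x y : V} (h : G.Adj x y) :
    s(x, y) ∈ (treePath G hG x y).edges := by
  have hp : (Walk.cons h Walk.nil : G.Walk x y).IsPath := by
    simp [Walk.cons_isPath_iff, h.ne]
  have := treePath_unique hG _ hp
  rw [← this]
  simp

lemma reachable_endpoint (hG : G.IsTree) (u x y : V) (h : G.Adj x y) :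
    (G.deleteEdges {s(x, y)}).Reachable u x ∨ (G.deleteEdges {s(x, y)}).Reachable u y := by
  by_cases he : s(x, y) ∈ (treePath G hG u x).edges
  · obtain ⟨d, hd, hde⟩ := List.mem_map.mp he
    have := (dart_reachable (treePath_isPath hG u x) hd).1
    rw [hde] at this
    have hxy : (d.toProd.1 = x ∧ d.toProd.2 = y) ∨ (d.toProd.1 = y ∧ d.toProd.2 = x) := by
      have : s(d.toProd.1, d.toProd.2) = s(x, y) := hde
      rwa [Sym2.eq_iff] at this
    rcases hxy with ⟨h1, _⟩ | ⟨h1, _⟩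
    · exact Or.inl (h1 ▸ this)
    · exact Or.inr (h1 ▸ this)
  · exact Or.inl ⟨(treePath G hG u x).toDeleteEdges {s(x, y)}
      (fun e' he' => by simp only [Set.mem_singleton_iff]; rintro rfl; exact he he')⟩

end aux

open RealInnerProductSpace in
/-- if the paths `P_{v₁,v₂}` and `P_{v₃,v₄}` share at least one edge and the
common subpath is traversed in opposite directions (every shared edge is traversed as
reversed darts), then `(Ψ v₂ - Ψ v₁) ⬝ (Ψ v₄ - Ψ v₃)` equals minus the total weight of the
shared edges, and in particular is negative. -/
theorem sqrtEmbed_inner_opposite_dir {V : Type*} [DecidableEq V] (G : SimpleGraph V)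
    (hG : G.IsTree) [Fintype G.edgeSet] (w : Sym2 V → ℝ) (hw : ∀ e ∈ G.edgeSet, 0 < w e)
    (v v₁ v₂ v₃ v₄ : V)
    (hshared : ∃ e : Sym2 V, e ∈ (treePath G hG v₁ v₂).edges ∧
      e ∈ (treePath G hG v₃ v₄).edges)
    (hopp : ∀ d₁ ∈ (treePath G hG v₁ v₂).darts, ∀ d₂ ∈ (treePath G hG v₃ v₄).darts,
      d₁.edge = d₂.edge → d₁.toProd = Prod.swap d₂.toProd) :
    ⟪sqrtEmbed G hG w v v₂ - sqrtEmbed G hG w v v₁,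
      sqrtEmbed G hG w v v₄ - sqrtEmbed G hG w v v₃⟫ =
      -(∑ e : G.edgeSet, if (e : Sym2 V) ∈ (treePath G hG v₁ v₂).edges ∧
          (e : Sym2 V) ∈ (treePath G hG v₃ v₄).edges then w e else 0) ∧
    ⟪sqrtEmbed G hG w v v₂ - sqrtEmbed G hG w v v₁,
      sqrtEmbed G hG w v v₄ - sqrtEmbed G hG w v v₃⟫ < 0 := by
  classical
  have key : ∀ e : G.edgeSet,
      (sqrtEmbed G hG w v v₂ e - sqrtEmbed G hG w v v₁ e) *
        (sqrtEmbed G hG w v v₄ e - sqrtEmbed G hG w v v₃ e) =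
      if (e : Sym2 V) ∈ (treePath G hG v₁ v₂).edges ∧
          (e : Sym2 V) ∈ (treePath G hG v₃ v₄).edges then -(w e) else 0 := by
    intro e
    by_cases h₁ : (e : Sym2 V) ∈ (treePath G hG v₁ v₂).edges
    · by_cases h₂ : (e : Sym2 V) ∈ (treePath G hG v₃ v₄).edges
      · -- main case
        obtain ⟨⟨⟨x, y⟩, hadj⟩, hd₁, hd₁e⟩ := List.mem_map.mp h₁
        obtain ⟨d₂, hd₂, hd₂e⟩ := List.mem_map.mp h₂
        have hxe : (e : Sym2 V) = s(x, y) := hd₁e.symm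
        have hswap := hopp _ hd₁ d₂ hd₂ (hd₁e.trans hd₂e.symm)
        have hd2p : d₂.toProd = (y, x) := by
          rw [← Prod.swap_swap d₂.toProd, ← hswap]
          rfl
        have hA := dart_reachable (treePath_isPath hG v₁ v₂) hd₁
        have hB := dart_reachable (treePath_isPath hG v₃ v₄) hd₂
        rw [hd₂e, hxe, hd2p] at hB
        have hA1 : (G.deleteEdges {s(x, y)}).Reachable v₁ x := hA.1
        have hA2 : (G.deleteEdges {s(x, y)}).Reachable y v₂ := hA.2
        have hB1 : (G.deleteEdges {s(x, y)}).Reachable v₃ y := hB.1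
        have hB2 : (G.deleteEdges {s(x, y)}).Reachable x v₄ := hB.2
        have hxy : ¬ (G.deleteEdges {s(x, y)}).Reachable x y :=
          (mem_treePath_iff hG x y _).mp (edge_mem_treePath hG hadj)
        have hw' : Real.sqrt (w s(x, y)) * Real.sqrt (w s(x, y)) = w s(x, y) :=
          Real.mul_self_sqrt (hw _ (hxe ▸ e.2)).le
        rw [hxe] at h₁ h₂
        simp only [sqrtEmbed, hxe, WithLp.ofLp_toLp]
        rcases reachable_endpoint hG v x y hadj with hv | hv
        · rw [if_pos ((mem_treePath_iff hG v v₂ _).mpr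
              (fun hr => hxy (((hv.symm.trans hr).trans hA2.symm)))),
            if_neg (fun hm => (mem_treePath_iff hG v v₁ _).mp hm (hv.trans hA1.symm)),
            if_neg (fun hm => (mem_treePath_iff hG v v₄ _).mp hm (hv.trans hB2)),
            if_pos ((mem_treePath_iff hG v v₃ _).mpr
              (fun hr => hxy ((hv.symm.trans hr).trans hB1))),
            if_pos ⟨h₁, h₂⟩]
          rw [sub_zero, zero_sub, mul_neg, hw']
        · rw [if_neg (fun hm => (mem_treePath_iff hG v v₂ _).mp hm (hv.trans hA2)),
            if_pos ((mem_treePath_iff hG v v₁ _).mpr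
              (fun hr => hxy (((hv.symm.trans hr).trans hA1).symm))),
            if_pos ((mem_treePath_iff hG v v₄ _).mpr
              (fun hr => hxy (((hv.symm.trans hr).trans hB2.symm).symm))),
            if_neg (fun hm => (mem_treePath_iff hG v v₃ _).mp hm (hv.trans hB1.symm)),
            if_pos ⟨h₁, h₂⟩]
          rw [zero_sub, sub_zero, neg_mul, hw']
      · -- e not in second path: second factor is 0
        have hr : (G.deleteEdges {(e : Sym2 V)}).Reachable v₃ v₄ := by
          by_contra hnr
          exact h₂ ((mem_treePath_iff hG v₃ v₄ _).mpr hnr)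
        have hiff : ((e : Sym2 V) ∈ (treePath G hG v v₄).edges) ↔
            ((e : Sym2 V) ∈ (treePath G hG v v₃).edges) := by
          rw [mem_treePath_iff, mem_treePath_iff]
          exact not_congr ⟨fun h => h.trans hr.symm, fun h => h.trans hr⟩
        simp only [sqrtEmbed, WithLp.ofLp_toLp]
        rw [if_congr hiff rfl rfl, sub_self, mul_zero, if_neg (fun h => h₂ h.2)]
    · -- e not in first path: first factor is 0
      have hr : (G.deleteEdges {(e : Sym2 V)}).Reachable v₁ v₂ := by
        by_contra hnr
        exact h₁ ((mem_treePath_iff hG v₁ v₂ _).mpr hnr)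
      have hiff : ((e : Sym2 V) ∈ (treePath G hG v v₂).edges) ↔
          ((e : Sym2 V) ∈ (treePath G hG v v₁).edges) := by
        rw [mem_treePath_iff, mem_treePath_iff]
        exact not_congr ⟨fun h => h.trans hr.symm, fun h => h.trans hr⟩
      simp only [sqrtEmbed, WithLp.ofLp_toLp]
      rw [if_congr hiff rfl rfl, sub_self, zero_mul, if_neg (fun h => h₁ h.1)]
  have hinner : ⟪sqrtEmbed G hG w v v₂ - sqrtEmbed G hG w v v₁,
      sqrtEmbed G hG w v v₄ - sqrtEmbed G hG w v v₃⟫ =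
      ∑ e : G.edgeSet, (sqrtEmbed G hG w v v₂ e - sqrtEmbed G hG w v v₁ e) *
        (sqrtEmbed G hG w v v₄ e - sqrtEmbed G hG w v v₃ e) := by
    simp [PiLp.inner_apply, RCLike.inner_apply, conj_trivial, PiLp.sub_apply]
    exact Finset.sum_congr rfl (fun _ _ => mul_comm _ _)
  have main : ⟪sqrtEmbed G hG w v v₂ - sqrtEmbed G hG w v v₁,
      sqrtEmbed G hG w v v₄ - sqrtEmbed G hG w v v₃⟫ =
      -(∑ e : G.edgeSet, if (e : Sym2 V) ∈ (treePath G hG v₁ v₂).edges ∧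
          (e : Sym2 V) ∈ (treePath G hG v₃ v₄).edges then w e else 0) := by
    rw [hinner, Finset.sum_congr rfl (fun e _ => key e), ← Finset.sum_neg_distrib]
    exact Finset.sum_congr rfl (fun e _ => by split <;> simp)
  refine ⟨main, ?_⟩
  rw [main, neg_lt, neg_zero]
  obtain ⟨e₀, he₁, he₂⟩ := hshared
  have he₀ : e₀ ∈ G.edgeSet := Walk.edges_subset_edgeSet _ he₁
  refine Finset.sum_pos' (fun e _ => ?_) ⟨⟨e₀, he₀⟩, Finset.mem_univ _, ?_⟩
  · split
    · exact (hw _ e.2).le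
    · exact le_rfl
  · rw [if_pos ⟨he₁, he₂⟩]
    exact hw _ he₀
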